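/- Let R be a commutative reduced ring. A finitely generated ideal I ⊆ Z(R) is an sd-ideal if and only if it is a dense ideal (ann(I) = 0). -/

import Mathlib

/-- The minimal prime spectrum of `R`, with the subspace (Zariski) topology. -/
abbrev MinSpec (R : Type*) [CommRing R] :=
  {P : PrimeSpectrum R // P.asIdeal ∈ minimalPrimes R}

lemma exists_annihilator_of_mem_minimalPrime {R : Type*} [CommRing R] [IsReduced R]
    {P : Ideal R} (hP : P ∈ minimalPrimes R) {x : R} (hx : x ∈ P) :
    ∃ c ∉ P, c * x = 0 := by
  have hI : P.IsPrime := hP.1.1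
  -- pass to the localization at P
  have hmem : algebraMap R (Localization P.primeCompl) x ∈
      IsLocalRing.maximalIdeal (Localization P.primeCompl) := by
    rw [← Localization.AtPrime.map_eq_maximalIdeal]
    exact Ideal.mem_map_of_mem _ hx
  have hnil : IsNilpotent (algebraMap R (Localization P.primeCompl) x) :=
    (by
      have h := IsLocalization.AtPrime.radical_map_of_mem_minimalPrimes
        (A := Localization P.primeCompl) (q := P) (I := ⊥) hP
      rw [Ideal.map_bot, Localization.AtPrime.map_eq_maximalIdeal] at h
      rw [← h] at hmem
      obtain ⟨n, hn⟩ := hmem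
      exact ⟨n, Ideal.mem_bot.mp hn⟩)
  obtain ⟨n, hn⟩ := hnil
  rw [← map_pow, ← map_zero (algebraMap R (Localization P.primeCompl))] at hn
  obtain ⟨c, hc⟩ := (IsLocalization.eq_iff_exists P.primeCompl _).mp hn
  refine ⟨(c : R), c.2, ?_⟩
  have h0 : ((c : R) * x) ^ (n + 1) = 0 := by
    have : (c : R) * x ^ n = 0 := by simpa using hc
    calc ((c : R) * x) ^ (n + 1) = (c : R) ^ n * x * ((c : R) * x ^ n) := by ring
    _ = 0 := by rw [this, mul_zero]
  exact (IsNilpotent.eq_zero ⟨n + 1, h0⟩)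

/-- A f.g. ideal of zero divisors is an sd-ideal iff it is dense. -/
theorem fg_sd_iff_dense (R : Type*) [CommRing R] [IsReduced R] (I : Ideal R)
    (hfg : I.FG) (hZ : ∀ x ∈ I, x ∉ nonZeroDivisors R) :
    (∀ P ∈ minimalPrimes R, ¬ I ≤ P) ↔
      (∀ a : R, (∀ x ∈ I, a * x = 0) → a = 0) := by
  constructor
  · intro h a ha
    by_contra ha0
    have hsInf : sInf (minimalPrimes R) = ⊥ := by
      rw [minimalPrimes, Ideal.sInf_minimalPrimes]
      simpa [nilradical] using (nilradical_eq_zero R)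
    have : a ∉ sInf (minimalPrimes R) := by
      rw [hsInf]; simpa using ha0
    rw [Submodule.mem_sInf] at this
    push_neg at this
    obtain ⟨P, hPmin, haP⟩ := this
    have hI : Ideal.IsPrime P := hPmin.1.1
    refine h P hPmin fun x hx => ?_
    have : a * x ∈ P := by rw [ha x hx]; exact P.zero_mem
    exact (hI.mem_or_mem this).resolve_left haP
  · intro hd P hPmin hle
    classical
    have hI : P.IsPrime := hPmin.1.1
    obtain ⟨s, hs⟩ := hfg
    have key : ∀ x : s, ∃ c, c ∉ P ∧ c * (x : R) = 0 := by
      rintro ⟨x, hx⟩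
      have hxI : x ∈ I := hs ▸ Ideal.subset_span hx
      obtain ⟨c, hc, hcx⟩ := exists_annihilator_of_mem_minimalPrime hPmin (hle hxI)
      exact ⟨c, hc, hcx⟩
    choose f hf1 hf2 using key
    set c : R := ∏ x ∈ s.attach, f x with hc
    have hcP : c ∉ P := Submonoid.prod_mem P.primeCompl fun x _ => hf1 x
    have hckill : ∀ x ∈ I, c * x = 0 := by
      intro x hx
      rw [← hs] at hx
      induction hx using Submodule.span_induction with
      | mem y hy =>
        have : c = (∏ z ∈ s.attach.erase ⟨y, hy⟩, f z) * f ⟨y, hy⟩ := by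
          rw [hc, ← Finset.prod_erase_mul _ _ (s.mem_attach ⟨y, hy⟩)]
        rw [this, mul_assoc, hf2 ⟨y, hy⟩, mul_zero]
      | zero => rw [mul_zero]
      | add y z _ _ hy hz => rw [mul_add, hy, hz, add_zero]
      | smul r y _ hy => rw [smul_eq_mul, ← mul_assoc, mul_comm c r, mul_assoc, hy, mul_zero]
    have : c = 0 := hd c hckill
    exact hcP (this ▸ P.zero_mem)
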